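/- Let k ≥ 2, d ≥ 1, let S be a training set with ‖x_i‖_∞ ≤ 1 for all i, let (F_t, W_t, j_t) be a ShareBoost sequence for the training loss L, and let W★ ∈ ℝ^{k×d} be any matrix. Define ε_t = L(W_t) − L(W★). Then for every t, if ε_t > 0 then ε_t − ε_{t+1} ≥ ε_t² / (4 ‖W★‖²_{∞,1}). -/

import Mathlib

open scoped BigOperators

noncomputable section

/-- The multiclass logistic loss for label `y`. -/
def mcLoss (k : ℕ) (y : Fin k) (v : Fin k → ℝ) : ℝ :=
  Real.log (∑ y' : Fin k, Real.exp ((if y' ≠ y then (1 : ℝ) else 0) - v y + v y'))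

/-- The average training loss of the matrix `W` (viewed as `Fin k → Fin d → ℝ`). -/
def trainLoss (k d m : ℕ) (x : Fin m → Fin d → ℝ) (y : Fin m → Fin k)
    (W : Fin k → Fin d → ℝ) : ℝ :=
  (1 / (m : ℝ)) * ∑ i : Fin m, mcLoss k (y i) (fun q => ∑ j : Fin d, W q j * x i j)

/-- The `r`-th column of the gradient matrix of `L` at `W`. -/
def gradCol (k d : ℕ) (L : (Fin k → Fin d → ℝ) → ℝ) (W : Fin k → Fin d → ℝ)
    (r : Fin d) : Fin k → ℝ :=
  fun q => fderiv ℝ L W (fun q' j' => if q' = q ∧ j' = r then (1 : ℝ) else 0)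

/-- A ShareBoost sequence for the training loss determined by the sample `(x, y)`. -/
structure ShareBoostSeq (k d m : ℕ) (x : Fin m → Fin d → ℝ) (y : Fin m → Fin k)
    (F : ℕ → Finset (Fin d)) (W : ℕ → Fin k → Fin d → ℝ) (jj : ℕ → Fin d) : Prop where
  F_zero : F 0 = ∅
  W_supp : ∀ t, ∀ i ∉ F t, ∀ q, W t q i = 0
  W_min : ∀ t, ∀ V : Fin k → Fin d → ℝ, (∀ i ∉ F t, ∀ q, V q i = 0) →
    trainLoss k d m x y (W t) ≤ trainLoss k d m x y V
  j_max : ∀ t, ∀ r : Fin d,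
    ∑ q : Fin k, |gradCol k d (trainLoss k d m x y) (W t) r q| ≤
      ∑ q : Fin k, |gradCol k d (trainLoss k d m x y) (W t) (jj t) q|
  F_succ : ∀ t, F (t + 1) = insert (jj t) (F t)


section SBAux
open Real Finset


lemma sb_exp_le {z : ℝ} (h : z ≤ 1) : Real.exp z ≤ 1 + z + z ^ 2 := by
  rcases le_or_gt (-1) z with h1 | h1
  · have hb := Real.exp_bound (x := z) (abs_le.2 ⟨h1, h⟩) (n := 2) (by norm_num)
    have h2 : |z| ^ 2 = z ^ 2 := sq_abs z
    have h3 : (∑ m ∈ Finset.range 2, z ^ m / (m.factorial : ℝ)) = 1 + z := by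
      simp [Finset.sum_range_succ]
    rw [h3, h2] at hb
    have h4 : Real.exp z - (1 + z) ≤ z ^ 2 * ((2:ℕ).succ / ((2:ℕ).factorial * (2:ℕ))) :=
      (abs_le.1 hb).2
    have : ((2:ℕ).succ / ((2:ℕ).factorial * (2:ℕ)) : ℝ) = 3 / 4 := by norm_num [Nat.factorial]
    rw [this] at h4
    nlinarith [sq_nonneg z]
  · have h2 : Real.exp z ≤ 1 := by
      rw [show (1:ℝ) = Real.exp 0 by simp]
      exact Real.exp_le_exp.2 (by linarith)
    nlinarith [sq_nonneg z]

variable {ι : Type*} [Fintype ι]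

/-- softmax weights -/
def smx (a : ι → ℝ) (q : ι) : ℝ := Real.exp (a q) / ∑ q', Real.exp (a q')

lemma sum_exp_pos [Nonempty ι] (a : ι → ℝ) : 0 < ∑ q, Real.exp (a q) :=
  Finset.sum_pos (fun q _ => Real.exp_pos _) Finset.univ_nonempty

lemma smx_nonneg [Nonempty ι] (a : ι → ℝ) (q : ι) : 0 ≤ smx a q :=
  div_nonneg (Real.exp_pos _).le (sum_exp_pos a).le

lemma smx_sum [Nonempty ι] (a : ι → ℝ) : ∑ q, smx a q = 1 := by
  unfold smx
  rw [← Finset.sum_div]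
  exact div_self (sum_exp_pos a).ne'

lemma sum_exp_add [Nonempty ι] (a b : ι → ℝ) :
    ∑ q, Real.exp (a q + b q) = (∑ q, Real.exp (a q)) * ∑ q, smx a q * Real.exp (b q) := by
  rw [Finset.mul_sum]
  refine Finset.sum_congr rfl fun q _ => ?_
  unfold smx
  rw [Real.exp_add]
  field_simp

lemma smx_exp_sum_pos [Nonempty ι] (a b : ι → ℝ) : 0 < ∑ q, smx a q * Real.exp (b q) :=
  Finset.sum_pos (fun q _ => mul_pos (div_pos (Real.exp_pos _) (sum_exp_pos a)) (Real.exp_pos _))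
    Finset.univ_nonempty

/-- Jensen lower bound for log-sum-exp. -/
lemma lse_lower [Nonempty ι] (a b : ι → ℝ) :
    Real.log (∑ q, Real.exp (a q)) + ∑ q, smx a q * b q ≤
      Real.log (∑ q, Real.exp (a q + b q)) := by
  rw [sum_exp_add, Real.log_mul (sum_exp_pos a).ne' (smx_exp_sum_pos a b).ne']
  have hj : Real.exp (∑ q, smx a q * b q) ≤ ∑ q, smx a q * Real.exp (b q) := by
    have := convexOn_exp.map_sum_le (t := Finset.univ) (w := smx a) (p := b)
      (fun q _ => smx_nonneg a q) (smx_sum a) (fun q _ => Set.mem_univ _)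
    simpa [smul_eq_mul] using this
  have := Real.log_le_log (Real.exp_pos _) hj
  rw [Real.log_exp] at this
  linarith

/-- Smoothness upper bound for log-sum-exp. -/
lemma lse_upper [Nonempty ι] (a b : ι → ℝ) (c : ℝ) (hb : ∀ q, b q ≤ 1)
    (hc : ∀ q, (b q) ^ 2 ≤ c) :
    Real.log (∑ q, Real.exp (a q + b q)) ≤
      Real.log (∑ q, Real.exp (a q)) + (∑ q, smx a q * b q) + c := by
  rw [sum_exp_add, Real.log_mul (sum_exp_pos a).ne' (smx_exp_sum_pos a b).ne']
  have h1 : Real.log (∑ q, smx a q * Real.exp (b q)) ≤ (∑ q, smx a q * Real.exp (b q)) - 1 :=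
    Real.log_le_sub_one_of_pos (smx_exp_sum_pos a b)
  have h2 : ∑ q, smx a q * Real.exp (b q) ≤ ∑ q, smx a q * (1 + b q + b q ^ 2) :=
    Finset.sum_le_sum fun q _ => mul_le_mul_of_nonneg_left (sb_exp_le (hb q)) (smx_nonneg a q)
  have h3 : ∑ q, smx a q * (1 + b q + b q ^ 2) =
      1 + (∑ q, smx a q * b q) + ∑ q, smx a q * b q ^ 2 := by
    simp only [mul_add, Finset.sum_add_distrib, mul_one, smx_sum a]
  have h4 : ∑ q, smx a q * b q ^ 2 ≤ ∑ q, smx a q * c :=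
    Finset.sum_le_sum fun q _ => mul_le_mul_of_nonneg_left (hc q) (smx_nonneg a q)
  have h5 : ∑ q, smx a q * c = c := by rw [← Finset.sum_mul, smx_sum a, one_mul]
  linarith

/-- exponent vector -/

def aV (k : ℕ) (y : Fin k) (v : Fin k → ℝ) : Fin k → ℝ :=
  fun q => (if q ≠ y then (1 : ℝ) else 0) - v y + v q

lemma mcLoss_eq (k : ℕ) (y : Fin k) (v : Fin k → ℝ) :
    mcLoss k y v = Real.log (∑ q, Real.exp (aV k y v q)) := rfl

/-- the derivative of `mcLoss k y` at `v` -/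
def Dclm (k : ℕ) (y : Fin k) (v : Fin k → ℝ) : (Fin k → ℝ) →L[ℝ] ℝ :=
  ∑ q, smx (aV k y v) q •
    ((ContinuousLinearMap.proj q : (Fin k → ℝ) →L[ℝ] ℝ) - ContinuousLinearMap.proj y)

lemma Dclm_apply (k : ℕ) (y : Fin k) (v u : Fin k → ℝ) :
    Dclm k y v u = ∑ q, smx (aV k y v) q * (u q - u y) := by
  simp [Dclm]

lemma Dclm_apply' {k : ℕ} (hk : 0 < k) (y : Fin k) (v u : Fin k → ℝ) :
    Dclm k y v u = (∑ q, smx (aV k y v) q * u q) - u y := by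
  haveI : Nonempty (Fin k) := ⟨⟨0, hk⟩⟩
  rw [Dclm_apply]
  simp only [mul_sub, Finset.sum_sub_distrib, ← Finset.sum_mul, smx_sum]
  ring

lemma hasFDeriv_mcLoss {k : ℕ} (hk : 0 < k) (y : Fin k) (v : Fin k → ℝ) :
    HasFDerivAt (mcLoss k y) (Dclm k y v) v := by
  haveI : Nonempty (Fin k) := ⟨⟨0, hk⟩⟩
  have hA : ∀ q : Fin k, HasFDerivAt (fun w : Fin k → ℝ => aV k y w q)
      ((ContinuousLinearMap.proj q : (Fin k → ℝ) →L[ℝ] ℝ) - ContinuousLinearMap.proj y) v := by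
    intro q
    have heq : (fun w : Fin k → ℝ => aV k y w q)
        = fun w : Fin k → ℝ => (if q ≠ y then (1:ℝ) else 0) + (w q - w y) := by
      funext w; simp [aV]; ring
    rw [heq]
    exact (((ContinuousLinearMap.proj q (R := ℝ) (φ := fun _ : Fin k => ℝ)).hasFDerivAt.sub
      (ContinuousLinearMap.proj y).hasFDerivAt).const_add _)
  have hsum : HasFDerivAt (fun w : Fin k → ℝ => ∑ q, Real.exp (aV k y w q))
      (∑ q, Real.exp (aV k y v q) •
        ((ContinuousLinearMap.proj q : (Fin k → ℝ) →L[ℝ] ℝ) - ContinuousLinearMap.proj y)) v :=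
    HasFDerivAt.fun_sum (fun q _ => (hA q).exp)
  have hlog := hsum.log (sum_exp_pos (aV k y v)).ne'
  have : mcLoss k y = fun w => Real.log (∑ q, Real.exp (aV k y w q)) := rfl
  rw [this]
  refine hlog.congr_fderiv (Eq.symm ?_)
  ext u
  simp only [Dclm, ContinuousLinearMap.coe_sum', Finset.sum_apply,
    ContinuousLinearMap.coe_smul', Pi.smul_apply, smul_eq_mul]
  rw [Finset.mul_sum]
  refine Finset.sum_congr rfl fun q _ => ?_
  simp only [ContinuousLinearMap.smul_apply, ContinuousLinearMap.coe_sub',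
    Pi.sub_apply, ContinuousLinearMap.proj_apply, smul_eq_mul]
  unfold smx
  field_simp


variable (k d m : ℕ) (x : Fin m → Fin d → ℝ) (y : Fin m → Fin k)

/-- the linear map `W ↦ W x_i` -/
def AvL (i : Fin m) : (Fin k → Fin d → ℝ) →L[ℝ] (Fin k → ℝ) :=
  ContinuousLinearMap.pi fun q => ∑ j, x i j •
    ((ContinuousLinearMap.proj j : (Fin d → ℝ) →L[ℝ] ℝ).comp
      (ContinuousLinearMap.proj q : (Fin k → Fin d → ℝ) →L[ℝ] (Fin d → ℝ)))

lemma AvL_apply (i : Fin m) (W : Fin k → Fin d → ℝ) (q : Fin k) :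
    AvL k d m x i W q = ∑ j, W q j * x i j := by
  simp [AvL, mul_comm]

/-- the derivative of trainLoss at W -/
def GWc (W : Fin k → Fin d → ℝ) : (Fin k → Fin d → ℝ) →L[ℝ] ℝ :=
  (1 / (m : ℝ)) • ∑ i, (Dclm k (y i) (AvL k d m x i W)).comp (AvL k d m x i)

lemma trainLoss_eq (W : Fin k → Fin d → ℝ) :
    trainLoss k d m x y W = (1 / (m : ℝ)) * ∑ i, mcLoss k (y i) (AvL k d m x i W) := by
  have h : ∀ i : Fin m, (fun q => ∑ j, W q j * x i j) = AvL k d m x i W := by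
    intro i; funext q; rw [AvL_apply]
  unfold trainLoss
  exact congrArg _ (Finset.sum_congr rfl fun i _ => congrArg (mcLoss k (y i)) (h i))

lemma hasFDeriv_trainLoss (hk : 0 < k) (W : Fin k → Fin d → ℝ) :
    HasFDerivAt (trainLoss k d m x y) (GWc k d m x y W) W := by
  have h : ∀ i : Fin m, HasFDerivAt (fun V => mcLoss k (y i) (AvL k d m x i V))
      ((Dclm k (y i) (AvL k d m x i W)).comp (AvL k d m x i)) W :=
    fun i => (hasFDeriv_mcLoss hk (y i) (AvL k d m x i W)).comp W (AvL k d m x i).hasFDerivAt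
  have hsum := HasFDerivAt.fun_sum (fun i (_ : i ∈ Finset.univ) => h i)
  have hmul := hsum.const_mul (1 / (m : ℝ))
  have heq : trainLoss k d m x y
      = fun V => (1 / (m : ℝ)) * ∑ i, mcLoss k (y i) (AvL k d m x i V) :=
    funext fun V => trainLoss_eq k d m x y V
  rw [heq]
  exact hmul

/-- basis matrix -/
def Eb (k d : ℕ) (q : Fin k) (r : Fin d) : Fin k → Fin d → ℝ :=
  fun q' j' => if q' = q ∧ j' = r then (1 : ℝ) else 0

lemma gradCol_eq (hk : 0 < k) (W : Fin k → Fin d → ℝ) (r : Fin d) (q : Fin k) :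
    gradCol k d (trainLoss k d m x y) W r q = GWc k d m x y W (Eb k d q r) := by
  unfold gradCol Eb
  rw [(hasFDeriv_trainLoss k d m x y hk W).fderiv]

lemma matrix_decomp (V : Fin k → Fin d → ℝ) :
    V = ∑ r, ∑ q, V q r • Eb k d q r := by
  funext q' j'
  simp only [Finset.sum_apply, Pi.smul_apply, Eb, smul_eq_mul, mul_ite, mul_one, mul_zero,
    ite_and]
  rw [Finset.sum_comm]
  simp

lemma GWc_decomp (hk : 0 < k) (W V : Fin k → Fin d → ℝ) :
    GWc k d m x y W V = ∑ r, ∑ q, V q r * gradCol k d (trainLoss k d m x y) W r q := by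
  conv_lhs => rw [matrix_decomp k d V]
  rw [map_sum]
  refine Finset.sum_congr rfl fun r _ => ?_
  rw [map_sum]
  refine Finset.sum_congr rfl fun q _ => ?_
  rw [map_smul, gradCol_eq k d m x y hk, smul_eq_mul]


lemma mc_lower {k : ℕ} (hk : 0 < k) (y : Fin k) (v u : Fin k → ℝ) :
    mcLoss k y v + Dclm k y v u ≤ mcLoss k y (v + u) := by
  haveI : Nonempty (Fin k) := ⟨⟨0, hk⟩⟩
  have key := lse_lower (aV k y v) (fun q => u q - u y)
  have ha : ∀ q, aV k y (v + u) q = aV k y v q + (u q - u y) := by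
    intro q; simp only [aV, Pi.add_apply]; ring
  rw [mcLoss_eq, mcLoss_eq, Dclm_apply]
  calc Real.log (∑ q, Real.exp (aV k y v q)) + ∑ q, smx (aV k y v) q * (u q - u y) ≤
      Real.log (∑ q, Real.exp (aV k y v q + (u q - u y))) := key
    _ = Real.log (∑ q, Real.exp (aV k y (v + u) q)) := by
        congr 1; exact Finset.sum_congr rfl fun q _ => by rw [ha q]

lemma mc_upper {k : ℕ} (hk : 0 < k) (y : Fin k) (v u : Fin k → ℝ) (η : ℝ) (hη : η ≤ 1)
    (hu : ∀ q, |u q| ≤ η) :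
    mcLoss k y (v + u) ≤ mcLoss k y v + Dclm k y v u + η ^ 2 := by
  haveI : Nonempty (Fin k) := ⟨⟨0, hk⟩⟩
  have key := lse_upper (aV k y v) u (η ^ 2)
    (fun q => le_trans (le_abs_self _) (le_trans (hu q) hη))
    (fun q => by
      have h1 := hu q
      have h2 := abs_nonneg (u q)
      nlinarith [sq_abs (u q)])
  have ha : ∀ q, aV k y (v + u) q = (aV k y v q + u q) + (-(u y)) := by
    intro q; simp only [aV, Pi.add_apply]; ring
  have hsplit : mcLoss k y (v + u) = -(u y) + Real.log (∑ q, Real.exp (aV k y v q + u q)) := by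
    rw [mcLoss_eq]
    have h1 : (∑ q, Real.exp (aV k y (v + u) q))
        = (∑ q, Real.exp (aV k y v q + u q)) * Real.exp (-(u y)) := by
      rw [Finset.sum_mul]
      exact Finset.sum_congr rfl fun q _ => by rw [← Real.exp_add, ← ha q]
    rw [h1, Real.log_mul (sum_exp_pos _).ne' (Real.exp_ne_zero _), Real.log_exp]
    ring
  rw [hsplit, Dclm_apply' hk, mcLoss_eq]
  linarith

lemma trainLoss_lb (k d m : ℕ) (x : Fin m → Fin d → ℝ) (y : Fin m → Fin k)
    (hk : 0 < k) (W0 V : Fin k → Fin d → ℝ) :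
    trainLoss k d m x y W0 + GWc k d m x y W0 (V - W0) ≤ trainLoss k d m x y V := by
  rw [trainLoss_eq, trainLoss_eq]
  have happ : GWc k d m x y W0 (V - W0)
      = (1 / (m : ℝ)) * ∑ i, Dclm k (y i) (AvL k d m x i W0) (AvL k d m x i (V - W0)) := by
    simp [GWc, ContinuousLinearMap.sum_apply]
  rw [happ, ← mul_add]
  apply mul_le_mul_of_nonneg_left _ (by positivity)
  rw [← Finset.sum_add_distrib]
  apply Finset.sum_le_sum
  intro i _
  have h := mc_lower hk (y i) (AvL k d m x i W0) (AvL k d m x i (V - W0))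
  have h2 : AvL k d m x i W0 + AvL k d m x i (V - W0) = AvL k d m x i V := by
    rw [map_sub]; abel
  rwa [h2] at h

lemma trainLoss_ub (k d m : ℕ) (x : Fin m → Fin d → ℝ) (y : Fin m → Fin k)
    (hk : 0 < k) (hm : 0 < m) (W0 Δ : Fin k → Fin d → ℝ) (η : ℝ) (hη : η ≤ 1)
    (hΔ : ∀ i q, |AvL k d m x i Δ q| ≤ η) :
    trainLoss k d m x y (W0 + Δ) ≤
      trainLoss k d m x y W0 + GWc k d m x y W0 Δ + η ^ 2 := by
  rw [trainLoss_eq, trainLoss_eq]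
  have happ : GWc k d m x y W0 Δ
      = (1 / (m : ℝ)) * ∑ i, Dclm k (y i) (AvL k d m x i W0) (AvL k d m x i Δ) := by
    simp [GWc, ContinuousLinearMap.sum_apply]
  rw [happ]
  have hstep : ∀ i : Fin m, mcLoss k (y i) (AvL k d m x i (W0 + Δ)) ≤
      mcLoss k (y i) (AvL k d m x i W0) + Dclm k (y i) (AvL k d m x i W0) (AvL k d m x i Δ)
        + η ^ 2 := by
    intro i
    have h := mc_upper hk (y i) (AvL k d m x i W0) (AvL k d m x i Δ) η hη (hΔ i)
    rwa [← map_add] at h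
  calc (1 / (m : ℝ)) * ∑ i, mcLoss k (y i) (AvL k d m x i (W0 + Δ))
      ≤ (1 / (m : ℝ)) * ∑ i, (mcLoss k (y i) (AvL k d m x i W0)
          + Dclm k (y i) (AvL k d m x i W0) (AvL k d m x i Δ) + η ^ 2) := by
        apply mul_le_mul_of_nonneg_left (Finset.sum_le_sum fun i _ => hstep i) (by positivity)
    _ = (1 / (m : ℝ)) * ∑ i, mcLoss k (y i) (AvL k d m x i W0)
          + (1 / (m : ℝ)) * ∑ i, Dclm k (y i) (AvL k d m x i W0) (AvL k d m x i Δ) + η ^ 2 := by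
        rw [Finset.sum_add_distrib, Finset.sum_add_distrib, Finset.sum_const, card_univ,
          Fintype.card_fin, nsmul_eq_mul]
        have hm' : (m : ℝ) ≠ 0 := Nat.cast_ne_zero.2 hm.ne'
        field_simp

lemma grad_zero (k d m : ℕ) (x : Fin m → Fin d → ℝ) (y : Fin m → Fin k) (hk : 0 < k)
    (Ft : Finset (Fin d)) (W0 : Fin k → Fin d → ℝ)
    (hsupp : ∀ i ∉ Ft, ∀ q, W0 q i = 0)
    (hmin : ∀ V : Fin k → Fin d → ℝ, (∀ i ∉ Ft, ∀ q, V q i = 0) →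
      trainLoss k d m x y W0 ≤ trainLoss k d m x y V)
    (r : Fin d) (hr : r ∈ Ft) (q : Fin k) :
    gradCol k d (trainLoss k d m x y) W0 r q = 0 := by
  rw [gradCol_eq k d m x y hk]
  set E := Eb k d q r with hE
  have hpath : HasDerivAt (fun s : ℝ => W0 + s • E) E 0 := by
    simpa using ((hasDerivAt_id (0 : ℝ)).smul_const E).const_add W0
  have hL : HasFDerivAt (trainLoss k d m x y) (GWc k d m x y W0) (W0 + (0 : ℝ) • E) := by
    simpa using hasFDeriv_trainLoss k d m x y hk W0
  have hφ : HasDerivAt (fun s : ℝ => trainLoss k d m x y (W0 + s • E))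
      (GWc k d m x y W0 E) 0 := by have := hL.comp_hasDerivAt (x := 0) hpath; exact this
  have hmin0 : IsLocalMin (fun s : ℝ => trainLoss k d m x y (W0 + s • E)) 0 := by
    apply Filter.Eventually.of_forall
    intro s
    simp only [zero_smul, add_zero]
    apply hmin
    intro i hi qq
    have hir : i ≠ r := fun h => hi (h ▸ hr)
    simp [hE, Eb, hsupp i hi qq, hir]
  have h0 := hmin0.deriv_eq_zero
  rwa [hφ.deriv] at h0

lemma gradCol_abs_le (k d m : ℕ) (x : Fin m → Fin d → ℝ) (y : Fin m → Fin k)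
    (hk : 0 < k) (hm : 0 < m) (hx : ∀ i : Fin m, ‖x i‖ ≤ 1)
    (W0 : Fin k → Fin d → ℝ) (r : Fin d) :
    ∑ q, |gradCol k d (trainLoss k d m x y) W0 r q| ≤ 2 := by
  haveI : Nonempty (Fin k) := ⟨⟨0, hk⟩⟩
  have hAvE : ∀ (i : Fin m) (q0 : Fin k),
      AvL k d m x i (Eb k d q0 r) = fun q => if q = q0 then x i r else 0 := by
    intro i q0
    funext q
    rw [AvL_apply]
    by_cases hq : q = q0
    · simp [Eb, hq, Finset.sum_ite_eq']
    · simp [Eb, hq]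
  have hxle : ∀ (i : Fin m) (j : Fin d), |x i j| ≤ 1 := by
    intro i j
    calc |x i j| = ‖x i j‖ := (Real.norm_eq_abs _).symm
      _ ≤ ‖x i‖ := norm_le_pi_norm (x i) j
      _ ≤ 1 := hx i
  have hrw : ∀ q0 : Fin k, gradCol k d (trainLoss k d m x y) W0 r q0
      = (1 / (m : ℝ)) * ∑ i, x i r *
          (smx (aV k (y i) (AvL k d m x i W0)) q0 - if y i = q0 then 1 else 0) := by
    intro q0
    rw [gradCol_eq k d m x y hk]
    have happ : GWc k d m x y W0 (Eb k d q0 r)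
        = (1 / (m : ℝ)) * ∑ i, Dclm k (y i) (AvL k d m x i W0) (AvL k d m x i (Eb k d q0 r)) := by
      simp [GWc, ContinuousLinearMap.sum_apply]
    rw [happ]
    congr 1
    refine Finset.sum_congr rfl fun i _ => ?_
    rw [hAvE i q0, Dclm_apply' hk]
    have h1 : ∑ q, smx (aV k (y i) (AvL k d m x i W0)) q * (if q = q0 then x i r else 0)
        = smx (aV k (y i) (AvL k d m x i W0)) q0 * x i r := by
      simp only [mul_ite, mul_zero]
      rw [Finset.sum_ite_eq' Finset.univ q0 (fun q => smx (aV k (y i) (AvL k d m x i W0)) q * x i r)]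
      simp
    rw [h1]
    by_cases hy : y i = q0 <;> simp [hy] <;> ring
  calc ∑ q0, |gradCol k d (trainLoss k d m x y) W0 r q0|
      ≤ ∑ q0, (1 / (m : ℝ)) * ∑ i, |x i r| *
          |smx (aV k (y i) (AvL k d m x i W0)) q0 - if y i = q0 then 1 else 0| := by
        refine Finset.sum_le_sum fun q0 _ => ?_
        rw [hrw q0, abs_mul, abs_of_nonneg (by positivity : (0:ℝ) ≤ 1 / (m:ℝ))]
        refine mul_le_mul_of_nonneg_left ?_ (by positivity)
        refine le_trans (Finset.abs_sum_le_sum_abs _ _) (le_of_eq ?_)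
        exact Finset.sum_congr rfl fun i _ => abs_mul _ _
    _ = (1 / (m : ℝ)) * ∑ i, ∑ q0, |x i r| *
          |smx (aV k (y i) (AvL k d m x i W0)) q0 - if y i = q0 then 1 else 0| := by
        rw [← Finset.mul_sum, Finset.sum_comm]
    _ ≤ (1 / (m : ℝ)) * ∑ _i : Fin m, (2 : ℝ) := by
        refine mul_le_mul_of_nonneg_left (Finset.sum_le_sum fun i _ => ?_) (by positivity)
        rw [← Finset.mul_sum]
        have hd : ∑ q0, |smx (aV k (y i) (AvL k d m x i W0)) q0 - if y i = q0 then 1 else 0|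
            ≤ 2 := by
          have hstep : ∀ q0 : Fin k,
              |smx (aV k (y i) (AvL k d m x i W0)) q0 - if y i = q0 then 1 else 0|
                ≤ smx (aV k (y i) (AvL k d m x i W0)) q0 + (if y i = q0 then 1 else 0) := by
            intro q0
            refine le_trans (abs_sub _ _) ?_
            rw [abs_of_nonneg (smx_nonneg _ q0)]
            gcongr
            by_cases hy : y i = q0 <;> simp [hy]
          refine le_trans (Finset.sum_le_sum fun q0 _ => hstep q0) ?_
          rw [Finset.sum_add_distrib, smx_sum]
          have : ∑ q0 : Fin k, (if y i = q0 then (1:ℝ) else 0) = 1 := by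
            simp [Finset.sum_ite_eq]
          rw [this]
          norm_num
        have hS : (0:ℝ) ≤ ∑ q0, |smx (aV k (y i) (AvL k d m x i W0)) q0
            - if y i = q0 then 1 else 0| :=
          Finset.sum_nonneg fun q0 _ => abs_nonneg _
        calc |x i r| * ∑ q0, |smx (aV k (y i) (AvL k d m x i W0)) q0
              - if y i = q0 then 1 else 0|
            ≤ 1 * 2 := mul_le_mul (hxle i r) hd hS one_pos.le
          _ = 2 := one_mul 2
    _ = 2 := by
        rw [Finset.sum_const, card_univ, Fintype.card_fin, nsmul_eq_mul]
        have hm' : (m : ℝ) ≠ 0 := Nat.cast_ne_zero.2 hm.ne'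
        field_simp

lemma sbSignMulSelf (z : ℝ) : Real.sign z * z = |z| := by
  rcases lt_trichotomy z 0 with h | h | h
  · rw [Real.sign_of_neg h, abs_of_neg h]; ring
  · simp [h]
  · rw [Real.sign_of_pos h, abs_of_pos h]; ring

lemma sbAbsSignLe (z : ℝ) : |Real.sign z| ≤ 1 := by
  rcases lt_trichotomy z 0 with h | h | h
  · simp [Real.sign_of_neg h]
  · simp [h, Real.sign_zero]
  · simp [Real.sign_of_pos h]


end SBAux

/-- **One-step progress of ShareBoost.** With `ε_t = L(W_t) - L(W★)`, if `ε_t > 0` then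
`ε_t - ε_{t+1} ≥ ε_t² / (4 ‖W★‖²_{∞,1})`. -/
theorem shareBoost_one_step_progress
    (k d m : ℕ) (hk : 2 ≤ k) (hd : 1 ≤ d) (hm : 1 ≤ m)
    (x : Fin m → Fin d → ℝ) (y : Fin m → Fin k)
    (hx : ∀ i : Fin m, ‖x i‖ ≤ 1)
    (F : ℕ → Finset (Fin d)) (W : ℕ → Fin k → Fin d → ℝ) (jj : ℕ → Fin d)
    (hSB : ShareBoostSeq k d m x y F W jj)
    (Wstar : Fin k → Fin d → ℝ)
    (t : ℕ)
    (hpos : 0 < trainLoss k d m x y (W t) - trainLoss k d m x y Wstar) :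
    (trainLoss k d m x y (W t) - trainLoss k d m x y Wstar) -
        (trainLoss k d m x y (W (t + 1)) - trainLoss k d m x y Wstar) ≥
      (trainLoss k d m x y (W t) - trainLoss k d m x y Wstar) ^ 2 /
        (4 * (∑ r : Fin d, ‖fun q => Wstar q r‖) ^ 2) := by
  have hk0 : 0 < k := by omega
  have hm0 : 0 < m := hm
  -- abbreviations
  set g : Fin k → ℝ := gradCol k d (trainLoss k d m x y) (W t) (jj t) with hg
  set G1 : ℝ := ∑ q, |g q| with hG1
  set B : ℝ := ∑ r : Fin d, ‖fun q => Wstar q r‖ with hB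
  set ε : ℝ := trainLoss k d m x y (W t) - trainLoss k d m x y Wstar with hε
  have hG1nn : 0 ≤ G1 := Finset.sum_nonneg fun q _ => abs_nonneg _
  have hBnn : 0 ≤ B := Finset.sum_nonneg fun r _ => norm_nonneg _
  -- Step 1 : ε ≤ G1 * B
  have hterm : ∀ r : Fin d, -(‖fun q => Wstar q r‖ * G1) ≤
      ∑ q, (Wstar - W t) q r * gradCol k d (trainLoss k d m x y) (W t) r q := by
    intro r
    by_cases hr : r ∈ F t
    · have hz : ∀ q, gradCol k d (trainLoss k d m x y) (W t) r q = 0 :=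
        grad_zero k d m x y hk0 (F t) (W t) (hSB.W_supp t) (hSB.W_min t) r hr
      have h0 : (∑ q, (Wstar - W t) q r * gradCol k d (trainLoss k d m x y) (W t) r q) = 0 := by
        simp [hz]
      rw [h0]
      exact neg_nonpos.2 (mul_nonneg (norm_nonneg _) hG1nn)
    · have habs : |∑ q, (Wstar - W t) q r * gradCol k d (trainLoss k d m x y) (W t) r q|
          ≤ ‖fun q => Wstar q r‖ * G1 := by
        refine le_trans (Finset.abs_sum_le_sum_abs _ _) ?_
        have hWq : ∀ q : Fin k, (Wstar - W t) q r = Wstar q r := by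
          intro q; simp [hSB.W_supp t r hr q]
        calc ∑ q, |(Wstar - W t) q r * gradCol k d (trainLoss k d m x y) (W t) r q|
            = ∑ q, |Wstar q r| * |gradCol k d (trainLoss k d m x y) (W t) r q| := by
              refine Finset.sum_congr rfl fun q _ => ?_
              rw [hWq q, abs_mul]
          _ ≤ ∑ q, ‖fun q' => Wstar q' r‖ * |gradCol k d (trainLoss k d m x y) (W t) r q| := by
              refine Finset.sum_le_sum fun q _ => ?_
              refine mul_le_mul_of_nonneg_right ?_ (abs_nonneg _)
              have hnp := norm_le_pi_norm (fun q' => Wstar q' r) q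
              simpa using hnp
          _ = ‖fun q' => Wstar q' r‖ * ∑ q, |gradCol k d (trainLoss k d m x y) (W t) r q| := by
              rw [Finset.mul_sum]
          _ ≤ ‖fun q' => Wstar q' r‖ * G1 := by
              refine mul_le_mul_of_nonneg_left ?_ (norm_nonneg _)
              rw [hG1, hg]
              exact hSB.j_max t r
      linarith [neg_abs_le (∑ q, (Wstar - W t) q r * gradCol k d (trainLoss k d m x y) (W t) r q)]
  have hsum : -(B * G1) ≤ GWc k d m x y (W t) (Wstar - W t) := by
    rw [GWc_decomp k d m x y hk0]
    calc -(B * G1) = ∑ r : Fin d, -(‖fun q => Wstar q r‖ * G1) := by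
          rw [hB, Finset.sum_mul, ← Finset.sum_neg_distrib]
      _ ≤ _ := Finset.sum_le_sum fun r _ => hterm r
  have hεG1B : ε ≤ G1 * B := by
    have hlb := trainLoss_lb k d m x y hk0 (W t) Wstar
    have hmc : G1 * B = B * G1 := mul_comm _ _
    rw [hε]
    linarith
  have hG1le2 : G1 ≤ 2 := by
    rw [hG1, hg]; exact gradCol_abs_le k d m x y hk0 hm0 hx (W t) (jj t)
  have hBpos : 0 < B := by
    rcases eq_or_lt_of_le hBnn with hB0 | hBp
    · exfalso
      rw [← hB0, mul_zero] at hεG1B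
      rw [hε] at hεG1B
      linarith
    · exact hBp
  -- Step 2: the update
  set η : ℝ := ε / (2 * B) with hη
  have hηpos : 0 < η := div_pos hpos (by positivity)
  have hηle1 : η ≤ 1 := by
    rw [hη, div_le_one (by positivity)]
    nlinarith
  set Δ : Fin k → Fin d → ℝ :=
    fun q j' => if j' = jj t then -(η * Real.sign (g q)) else 0 with hΔ
  have hAvΔ : ∀ (i : Fin m) (q : Fin k), |AvL k d m x i Δ q| ≤ η := by
    intro i q
    rw [AvL_apply]
    have hsum1 : ∑ j, Δ q j * x i j = -(η * Real.sign (g q)) * x i (jj t) := by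
      rw [hΔ]
      simp only [ite_mul, zero_mul]
      rw [Finset.sum_ite_eq' Finset.univ (jj t) (fun j => -(η * Real.sign (g q)) * x i j)]
      simp
    rw [hsum1, abs_mul, abs_neg, abs_mul, abs_of_pos hηpos]
    have hxle : |x i (jj t)| ≤ 1 := by
      calc |x i (jj t)| = ‖x i (jj t)‖ := (Real.norm_eq_abs _).symm
        _ ≤ ‖x i‖ := norm_le_pi_norm _ _
        _ ≤ 1 := hx i
    have h1 := sbAbsSignLe (g q)
    calc η * |Real.sign (g q)| * |x i (jj t)| ≤ η * 1 * 1 :=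
          mul_le_mul (mul_le_mul_of_nonneg_left h1 hηpos.le) hxle (abs_nonneg _)
            (by positivity)
      _ = η := by ring
  have hGΔ : GWc k d m x y (W t) Δ = -(η * G1) := by
    rw [GWc_decomp k d m x y hk0]
    rw [Finset.sum_eq_single (jj t)
      (fun r _ hr => by simp [hΔ, hr])
      (fun h => absurd (Finset.mem_univ _) h)]
    have hterm2 : ∀ q : Fin k,
        Δ q (jj t) * gradCol k d (trainLoss k d m x y) (W t) (jj t) q = -(η * |g q|) := by
      intro q
      rw [hΔ]
      simp only [if_pos rfl]
      rw [← hg]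
      calc -(η * Real.sign (g q)) * g q = -(η * (Real.sign (g q) * g q)) := by ring
        _ = -(η * |g q|) := by rw [sbSignMulSelf]
    rw [Finset.sum_congr rfl fun q _ => hterm2 q, hG1, Finset.mul_sum]
    exact Finset.sum_neg_distrib (f := fun q => η * |g q|)
  -- Step 3: combine
  have hub := trainLoss_ub k d m x y hk0 hm0 (W t) Δ η hηle1 hAvΔ
  have hnext : trainLoss k d m x y (W (t + 1)) ≤ trainLoss k d m x y (W t + Δ) := by
    apply hSB.W_min (t + 1)
    intro i hi q
    rw [hSB.F_succ t, Finset.mem_insert] at hi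
    push_neg at hi
    simp [hSB.W_supp t i hi.2 q, hΔ, hi.1]
  have hchain : trainLoss k d m x y (W t) - trainLoss k d m x y (W (t + 1)) ≥ η * G1 - η ^ 2 := by
    rw [hGΔ] at hub
    linarith
  have hfinal : ε ^ 2 / (4 * B ^ 2) ≤ η * G1 - η ^ 2 := by
    rw [div_le_iff₀ (by positivity)]
    have hexp : (η * G1 - η ^ 2) * (4 * B ^ 2) = 2 * B * ε * G1 - ε ^ 2 := by
      rw [hη]; field_simp; ring
    rw [hexp]
    nlinarith [mul_le_mul_of_nonneg_left hεG1B hpos.le]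
  have : ε - (trainLoss k d m x y (W (t + 1)) - trainLoss k d m x y Wstar)
      = trainLoss k d m x y (W t) - trainLoss k d m x y (W (t + 1)) := by
    rw [hε]; ring
  rw [this]
  linarith
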